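/- Let x ∈ 𝔻 with #Ã₁(x) ≤ 1, i.e. the set Ã₁(x) of times of the largest modulus jump of x on (0,1] has at most one element. Then the modulus record time trimmer R̃_trim is jointly J1-continuous at x: for every sequence x_n ∈ 𝔻 converging to x in the J1-topology there exist λ_n ∈ Λ such that simultaneously ‖λ_n − I‖ → 0, ‖x_n ∘ λ_n − x‖ → 0 and ‖R̃_trim(x_n) ∘ λ_n − R̃_trim(x)‖ → 0. -/

import Mathlib

open Filter Topology Set unitInterval

noncomputable section

open scoped Classical

instance : Fact ((0:ℝ) ≤ 1) := ⟨zero_le_one⟩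

/-- The space `𝔻` of càdlàg functions on `[0,1]`: right-continuous everywhere with
finite left limits everywhere (conditions at the endpoints hold vacuously). -/
def Cadlag (x : I → ℝ) : Prop :=
  (∀ τ : I, Tendsto x (𝓝[>] τ) (𝓝 (x τ))) ∧ (∀ τ : I, ∃ l : ℝ, Tendsto x (𝓝[<] τ) (𝓝 l))

/-- The sup-norm `‖x‖ = sup_{0 ≤ τ ≤ 1} |x(τ)|`. -/
def dNorm (x : I → ℝ) : ℝ := ⨆ τ : I, |x τ|

/-- The jump `Δx(τ) = x(τ) - x(τ-)` of `x` at `τ`, with `Δx(0) := 0`. -/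
def jump (x : I → ℝ) (τ : I) : ℝ := if τ = 0 then 0 else x τ - Function.leftLim x τ

/-- The running supremum `S(x)(τ) = sup_{0 ≤ s ≤ τ} x(s)`. -/
def runSup (x : I → ℝ) (τ : I) : ℝ := sSup (x '' {s : I | s ≤ τ})

/-- The running absolute supremum `S̃(x)(τ) = sup_{0 ≤ s ≤ τ} |x(s)|`. -/
def runAbsSup (x : I → ℝ) (τ : I) : ℝ := sSup ((fun s => |x s|) '' {s : I | s ≤ τ})

/-- The largest positive jump `S_{+Δ}(x)(τ) = sup_{0 ≤ s ≤ τ} Δx(s)`. -/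
def posJumpSup (x : I → ℝ) (τ : I) : ℝ := sSup (jump x '' {s : I | s ≤ τ})

/-- The largest modulus jump `S̃_Δ(x)(τ) = sup_{0 ≤ s ≤ τ} |Δx(s)|`. -/
def modJumpSup (x : I → ℝ) (τ : I) : ℝ := sSup ((fun s => |jump x s|) '' {s : I | s ≤ τ})

/-- The first extremal positive trimming ("trim as you go") operator
`T^{(1,+)}_{rim}(x) = x - S_{+Δ}(x)`. -/
def trimPos (x : I → ℝ) : I → ℝ := fun τ => x τ - posJumpSup x τ

/-- `Λ`: continuous strictly increasing bijections of `[0,1]` fixing the endpoints. -/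
def IsTimeChange (l : I → I) : Prop := Continuous l ∧ StrictMono l ∧ l 0 = 0 ∧ l 1 = 1

/-- Convergence in the (strong) Skorokhod `J₁`-topology. -/
def J1Tendsto (xn : ℕ → I → ℝ) (x : I → ℝ) : Prop :=
  ∃ l : ℕ → I → I, (∀ n, IsTimeChange (l n)) ∧
    Tendsto (fun n => dNorm (fun τ => (l n τ : ℝ) - (τ : ℝ))) atTop (𝓝 0) ∧
    Tendsto (fun n => dNorm (fun τ => xn n (l n τ) - x τ)) atTop (𝓝 0)

/-- `Ã_τ(x)`: the times `s ∈ (0,τ]` of the largest modulus jump of `x` on `[0,τ]`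
(empty when `S̃_Δ(x)(τ) = 0`). -/
def tildeA (x : I → ℝ) (τ : I) : Set I :=
  {s : I | 0 < s ∧ s ≤ τ ∧ 0 < |jump x s| ∧ |jump x s| = modJumpSup x τ}

/-- `A⁺_τ(x)`: the times `s ∈ (0,τ]` of the largest positive jump of `x` on `[0,τ]`
(empty when `S_{+Δ}(x)(τ) = 0`). -/
def posA (x : I → ℝ) (τ : I) : Set I :=
  {s : I | 0 < s ∧ s ≤ τ ∧ 0 < jump x s ∧ jump x s = posJumpSup x τ}

/-- The signed largest-modulus ("trim as you go") trimmer `𝔗_rim`: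
`𝔗_rim(x)(τ) = x(τ) - Δx(L̃_τ(x))` if `Ã_τ(x) ≠ ∅`, `x(τ)` otherwise, where
`L̃_τ(x) = max Ã_τ(x)`. -/
def sgnModTrim (x : I → ℝ) : I → ℝ := fun τ =>
  if (tildeA x τ).Nonempty then x τ - jump x (sSup (tildeA x τ)) else x τ

/-- The record time ("lookback") trimmer:
`R_trim(x) = x - Δx(R₁(x))·1_{[R₁(x),1]}` if `A⁺₁(x) ≠ ∅`, `x` otherwise, where
`R₁(x) = min A⁺₁(x)`. -/
def recordTrim (x : I → ℝ) : I → ℝ := fun τ =>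
  if (posA x 1).Nonempty ∧ sInf (posA x 1) ≤ τ then x τ - jump x (sInf (posA x 1)) else x τ

/-- The modulus record time trimmer:
`R̃_trim(x) = x - Δx(R̃₁(x))·1_{[R̃₁(x),1]}` if `Ã₁(x) ≠ ∅`, `x` otherwise, where
`R̃₁(x) = min Ã₁(x)`. -/
def modRecordTrim (x : I → ℝ) : I → ℝ := fun τ =>
  if (tildeA x 1).Nonempty ∧ sInf (tildeA x 1) ≤ τ then x τ - jump x (sInf (tildeA x 1)) else x τ


/-! ### Auxiliary lemmas for `stmt13` -/

lemma I_nonneg (s : I) : (0 : I) ≤ s := unitInterval.nonneg'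

lemma I_le_one' (s : I) : s ≤ 1 := unitInterval.le_one'

lemma I_pos {s : I} (h : s ≠ 0) : 0 < s := (I_nonneg s).lt_of_ne (Ne.symm h)

lemma jump_zero (x : I → ℝ) : jump x 0 = 0 := by rw [jump]; exact if_pos rfl

lemma I_setLe_one : {s : I | s ≤ 1} = univ := eq_univ_of_forall fun s => I_le_one' s

lemma nebot_Iio {u : I} (hu : 0 < u) : (𝓝[<] u).NeBot := nhdsWithin_Iio_self_neBot' ⟨0, hu⟩

lemma Iio_zero_I : (Iio (0:I)) = ∅ := by ext u; simp [(I_nonneg u).not_gt]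

lemma Ioi_one_I : (Ioi (1:I)) = ∅ := by ext u; simp [(I_le_one' u).not_gt]

/-- A càdlàg function is bounded. -/
lemma cadlag_bounded {x : I → ℝ} (hx : Cadlag x) : ∃ C, ∀ τ : I, |x τ| ≤ C := by
  have key : ∀ τ : I, ∃ C, ∀ᶠ u in 𝓝 τ, |x u| ≤ C := by
    intro τ
    obtain ⟨l, hl⟩ := hx.2 τ
    refine ⟨max (|x τ| + 1) (|l| + 1), ?_⟩
    have hr := Metric.tendsto_nhds.mp (hx.1 τ) 1 one_pos
    have hl' := Metric.tendsto_nhds.mp hl 1 one_pos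
    have h1 : ∀ᶠ u in 𝓝[>] τ, |x u| ≤ max (|x τ| + 1) (|l| + 1) := by
      filter_upwards [hr] with u hu
      rw [Real.dist_eq] at hu
      have h2 := abs_sub_abs_le_abs_sub (x u) (x τ)
      have : |x u| ≤ |x τ| + 1 := by linarith
      exact this.trans (le_max_left _ _)
    have h2 : ∀ᶠ u in 𝓝[<] τ, |x u| ≤ max (|x τ| + 1) (|l| + 1) := by
      filter_upwards [hl'] with u hu
      rw [Real.dist_eq] at hu
      have h2 := abs_sub_abs_le_abs_sub (x u) l
      have : |x u| ≤ |l| + 1 := by linarith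
      exact this.trans (le_max_right _ _)
    have h3 : |x τ| ≤ max (|x τ| + 1) (|l| + 1) :=
      le_trans (by linarith) (le_max_left (|x τ| + 1) (|l| + 1))
    have huniv : (Iio τ ∪ ({τ} ∪ Ioi τ)) = univ := by
      ext u
      rcases lt_trichotomy u τ with h | h | h <;> simp [h]
    rw [show (𝓝 τ) = 𝓝[univ] τ from (nhdsWithin_univ τ).symm, ← huniv, nhdsWithin_union,
      nhdsWithin_union, nhdsWithin_singleton]
    rw [eventually_sup, eventually_sup, eventually_pure]
    exact ⟨h2, h3, h1⟩
  choose C hC using key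
  obtain ⟨t, -, ht⟩ := isCompact_univ.elim_nhds_subcover
    (fun τ => {u : I | |x u| ≤ C τ}) (fun τ _ => hC τ)
  have hne : t.Nonempty := by
    rcases Finset.eq_empty_or_nonempty t with rfl | h
    · exfalso
      have := ht (mem_univ (0:I))
      simpa using this
    · exact h
  refine ⟨t.sup' hne C, fun τ => ?_⟩
  have := ht (mem_univ τ)
  simp only [mem_iUnion] at this
  obtain ⟨w, hwt, hw⟩ := this
  exact le_trans hw (Finset.le_sup' C hwt)

/-- Jumps of a bounded càdlàg function are bounded. -/
lemma abs_jump_le {x : I → ℝ} (hx : Cadlag x) {C : ℝ} (hC : ∀ τ, |x τ| ≤ C) (u : I) :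
    |jump x u| ≤ 2 * C := by
  rcases eq_or_ne u 0 with rfl | h
  · have := (abs_nonneg (x 0)).trans (hC 0)
    rw [jump_zero, abs_zero]
    linarith
  · have hu : 0 < u := I_pos h
    haveI := nebot_Iio hu
    obtain ⟨l, hl⟩ := hx.2 u
    have hll : Function.leftLim x u = l := leftLim_eq_of_tendsto hl
    have hlC : |l| ≤ C := le_of_tendsto hl.abs (Eventually.of_forall fun v => hC v)
    rw [jump, if_neg h, hll]
    calc |x u - l| ≤ |x u| + |l| := abs_sub _ _
      _ ≤ 2 * C := by linarith [hC u]

lemma timeChange_surj {l : I → I} (hl : IsTimeChange l) : Function.Surjective l := by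
  intro y
  have h01 : (0:I) ≤ 1 := I_nonneg 1
  have h := intermediate_value_Icc h01 hl.1.continuousOn
  rw [hl.2.2.1, hl.2.2.2] at h
  obtain ⟨s, -, hs⟩ := h (mem_Icc.mpr ⟨I_nonneg y, I_le_one' y⟩)
  exact ⟨s, hs⟩

lemma timeChange_pos {l : I → I} (hl : IsTimeChange l) {s : I} (hs : 0 < s) : 0 < l s := by
  rw [show (0:I) = l 0 from hl.2.2.1.symm]
  exact hl.2.1 hs

lemma timeChange_tendsto_Iio {l : I → I} (hl : IsTimeChange l) (s : I) :
    Tendsto l (𝓝[<] s) (𝓝[<] l s) := by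
  rw [tendsto_nhdsWithin_iff]
  constructor
  · exact (hl.1.tendsto s).mono_left nhdsWithin_le_nhds
  · filter_upwards [self_mem_nhdsWithin] with u hu
    exact hl.2.1 hu

/-- Jumps are transferred by time changes, up to twice the uniform distance. -/
lemma jump_transfer {x y : I → ℝ} (hx : Cadlag x) (hy : Cadlag y) {l : I → I}
    (hl : IsTimeChange l) {ε : ℝ} (hε : ∀ τ, |y (l τ) - x τ| ≤ ε) (s : I) :
    |jump y (l s) - jump x s| ≤ 2 * ε := by
  have hε0 : 0 ≤ ε := (abs_nonneg _).trans (hε 0)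
  rcases eq_or_ne s 0 with rfl | hs
  · rw [hl.2.2.1]
    rw [jump_zero, jump_zero, sub_zero, abs_zero]
    linarith
  · have hs' : 0 < s := I_pos hs
    have hls : l s ≠ 0 := (timeChange_pos hl hs').ne'
    haveI h1 := nebot_Iio hs'
    haveI h2 := nebot_Iio (timeChange_pos hl hs')
    obtain ⟨lx, hlx⟩ := hx.2 s
    obtain ⟨ly, hly⟩ := hy.2 (l s)
    have hcomp : Tendsto (fun u => y (l u)) (𝓝[<] s) (𝓝 ly) :=
      hly.comp (timeChange_tendsto_Iio hl s)
    have e1 : Function.leftLim x s = lx := leftLim_eq_of_tendsto hlx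
    have e2 : Function.leftLim y (l s) = ly := leftLim_eq_of_tendsto hly
    have hd : |ly - lx| ≤ ε :=
      le_of_tendsto (hcomp.sub hlx).abs (Eventually.of_forall hε)
    rw [jump, jump, if_neg hs, if_neg hls, e1, e2]
    have h3 := hε s
    calc |y (l s) - ly - (x s - lx)| = |(y (l s) - x s) - (ly - lx)| := by ring_nf
      _ ≤ |y (l s) - x s| + |ly - lx| := abs_sub _ _
      _ ≤ 2 * ε := by linarith

/-- Near any point, all other points have jump less than `δ`. -/
lemma small_jumps_near {x : I → ℝ} (hx : Cadlag x) {δ : ℝ} (hδ : 0 < δ) (τ : I) :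
    ∀ᶠ u in 𝓝[≠] τ, |jump x u| < δ := by
  have hsplit : (𝓝[≠] τ : Filter I) = 𝓝[<] τ ⊔ 𝓝[>] τ := by
    rw [← Iio_union_Ioi, nhdsWithin_union]
  rw [hsplit, eventually_sup]
  constructor
  · -- left of τ
    rcases eq_or_ne τ 0 with rfl | h0
    · rw [show (𝓝[<] (0:I)) = ⊥ by rw [show Iio (0:I) = ∅ from Iio_zero_I, nhdsWithin_empty]]
      exact eventually_bot
    · have h0' : 0 < τ := I_pos h0
      obtain ⟨l₀, hl₀⟩ := hx.2 τ
      have hev : {u : I | dist (x u) l₀ < δ/4} ∈ 𝓝[<] τ :=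
        Metric.tendsto_nhds.mp hl₀ (δ/4) (by linarith)
      obtain ⟨a, ha, hsub⟩ := (mem_nhdsLT_iff_exists_Ioo_subset' h0').1 hev
      have hIoo : Ioo a τ ∈ 𝓝[<] τ := Ioo_mem_nhdsLT_of_mem ⟨ha, le_refl τ⟩
      filter_upwards [hIoo] with u hu
      have hu0 : 0 < u := lt_of_le_of_lt (I_nonneg a) hu.1
      haveI := nebot_Iio hu0
      obtain ⟨lu, hlu⟩ := hx.2 u
      have e : Function.leftLim x u = lu := leftLim_eq_of_tendsto hlu
      have sub2 : Ioo a u ⊆ Ioo a τ := Ioo_subset_Ioo_right hu.2.le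
      have hmem : Ioo a u ∈ 𝓝[<] u := Ioo_mem_nhdsLT_of_mem ⟨hu.1, le_refl u⟩
      have hlul : |lu - l₀| ≤ δ/4 := by
        have ht : Tendsto (fun v => |x v - l₀|) (𝓝[<] u) (𝓝 |lu - l₀|) :=
          (hlu.sub_const l₀).abs
        apply le_of_tendsto ht
        filter_upwards [hmem] with v hv
        have := hsub (sub2 hv)
        rw [mem_setOf_eq, Real.dist_eq] at this
        linarith
      have hxu : |x u - l₀| < δ/4 := by
        have := hsub hu
        rwa [mem_setOf_eq, Real.dist_eq] at this
      rw [jump, if_neg hu0.ne', e]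
      calc |x u - lu| = |(x u - l₀) - (lu - l₀)| := by ring_nf
        _ ≤ |x u - l₀| + |lu - l₀| := abs_sub _ _
        _ < δ := by linarith
  · -- right of τ
    rcases eq_or_ne τ 1 with rfl | h1
    · rw [show (𝓝[>] (1:I)) = ⊥ by rw [show Ioi (1:I) = ∅ from Ioi_one_I, nhdsWithin_empty]]
      exact eventually_bot
    · have h1' : τ < 1 := (I_le_one' τ).lt_of_ne h1
      have hev : {u : I | dist (x u) (x τ) < δ/4} ∈ 𝓝[>] τ :=
        Metric.tendsto_nhds.mp (hx.1 τ) (δ/4) (by linarith)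
      obtain ⟨b, hb, hsub⟩ := (mem_nhdsGT_iff_exists_Ioo_subset' h1').1 hev
      have hIoo : Ioo τ b ∈ 𝓝[>] τ := Ioo_mem_nhdsGT_of_mem ⟨le_refl τ, hb⟩
      filter_upwards [hIoo] with u hu
      have hu0 : 0 < u := lt_of_le_of_lt (I_nonneg τ) hu.1
      haveI := nebot_Iio hu0
      obtain ⟨lu, hlu⟩ := hx.2 u
      have e : Function.leftLim x u = lu := leftLim_eq_of_tendsto hlu
      have sub2 : Ioo τ u ⊆ Ioo τ b := Ioo_subset_Ioo_right hu.2.le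
      have hmem : Ioo τ u ∈ 𝓝[<] u := Ioo_mem_nhdsLT_of_mem ⟨hu.1, le_refl u⟩
      have hlul : |lu - x τ| ≤ δ/4 := by
        have ht : Tendsto (fun v => |x v - x τ|) (𝓝[<] u) (𝓝 |lu - x τ|) :=
          (hlu.sub_const (x τ)).abs
        apply le_of_tendsto ht
        filter_upwards [hmem] with v hv
        have := hsub (sub2 hv)
        rw [mem_setOf_eq, Real.dist_eq] at this
        linarith
      have hxu : |x u - x τ| < δ/4 := by
        have := hsub hu
        rwa [mem_setOf_eq, Real.dist_eq] at this
      rw [jump, if_neg hu0.ne', e]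
      calc |x u - lu| = |(x u - x τ) - (lu - x τ)| := by ring_nf
        _ ≤ |x u - x τ| + |lu - x τ| := abs_sub _ _
        _ < δ := by linarith

/-- A càdlàg function has only finitely many jumps of size at least `δ > 0`. -/
lemma finite_big_jumps {x : I → ℝ} (hx : Cadlag x) {δ : ℝ} (hδ : 0 < δ) :
    {s : I | δ ≤ |jump x s|}.Finite := by
  by_contra h
  have hinf : {s : I | δ ≤ |jump x s|}.Infinite := h
  obtain ⟨τ, hτ⟩ := hinf.exists_accPt_principal
  haveI : (𝓝[≠] τ ⊓ 𝓟 {s : I | δ ≤ |jump x s|}).NeBot := hτ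
  have hev : ∀ᶠ u in 𝓝[≠] τ ⊓ 𝓟 {s : I | δ ≤ |jump x s|}, False := by
    have h1 := (small_jumps_near hx hδ τ).filter_mono
      (inf_le_left (b := 𝓟 {s : I | δ ≤ |jump x s|}))
    have h2 : ∀ᶠ u in 𝓝[≠] τ ⊓ 𝓟 {s : I | δ ≤ |jump x s|}, δ ≤ |jump x u| :=
      (eventually_principal.mpr (fun u hu => hu)).filter_mono
        (inf_le_right (a := 𝓝[≠] τ))
    filter_upwards [h1, h2] with u hu1 hu2
    linarith
  obtain ⟨u, hu⟩ := hev.exists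
  exact hu

lemma mem_jump_image {x : I → ℝ} (u : I) :
    |jump x u| ∈ (fun s => |jump x s|) '' {s : I | s ≤ 1} :=
  ⟨u, by simp [I_le_one' u], rfl⟩

lemma bddAbove_jump_image {x : I → ℝ} (hx : Cadlag x) {C : ℝ} (hC : ∀ τ, |x τ| ≤ C) :
    BddAbove ((fun s => |jump x s|) '' {s : I | s ≤ 1}) := by
  refine ⟨2 * C, ?_⟩
  rintro v ⟨u, -, rfl⟩
  exact abs_jump_le hx hC u

/-- If some jump is nonzero then the largest modulus jump is attained. -/
lemma tildeA_nonempty_of_jump {x : I → ℝ} (hx : Cadlag x) {s₀ : I} (h : jump x s₀ ≠ 0) :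
    (tildeA x 1).Nonempty := by
  obtain ⟨C, hC⟩ := cadlag_bounded hx
  have hδ : 0 < |jump x s₀| := abs_pos.mpr h
  have hF : {s : I | |jump x s₀| ≤ |jump x s|}.Finite := finite_big_jumps hx hδ
  have hFne : (hF.toFinset).Nonempty := ⟨s₀, by simp⟩
  obtain ⟨st, hstF, hmax⟩ := Finset.exists_max_image hF.toFinset (fun s => |jump x s|) hFne
  have hst : |jump x s₀| ≤ |jump x st| := by
    have := hF.mem_toFinset.mp hstF
    exact this
  have hsup : modJumpSup x 1 = |jump x st| := by
    rw [modJumpSup]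
    apply le_antisymm
    · apply csSup_le ⟨_, mem_jump_image s₀⟩
      rintro v ⟨u, -, rfl⟩
      by_cases hu : u ∈ hF.toFinset
      · exact hmax u hu
      · have : ¬ (|jump x s₀| ≤ |jump x u|) := by
          rw [Set.Finite.mem_toFinset] at hu
          exact hu
        push_neg at this
        linarith
    · exact le_csSup (bddAbove_jump_image hx hC) (mem_jump_image st)
  have hstpos : 0 < |jump x st| := lt_of_lt_of_le hδ hst
  have hst0 : st ≠ 0 := by
    intro h0
    rw [h0, jump_zero, abs_zero] at hstpos
    exact lt_irrefl 0 hstpos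
  exact ⟨st, I_pos hst0, I_le_one' st, hstpos, hsup.symm⟩

/-- Gap below the maximal jump when the maximum is attained uniquely at `t`. -/
lemma jump_gap {x : I → ℝ} (hx : Cadlag x) {t : I} (ht : tildeA x 1 = {t}) {C : ℝ}
    (hC : ∀ τ, |x τ| ≤ C) :
    ∃ M', M' < modJumpSup x 1 ∧ 0 < M' ∧ ∀ s, s ≠ t → |jump x s| ≤ M' := by
  have htm : t ∈ tildeA x 1 := by rw [ht]; exact rfl
  set M := modJumpSup x 1 with hMdef
  have hM : |jump x t| = M := htm.2.2.2
  have hM0 : 0 < M := hM ▸ htm.2.2.1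
  have hF : {s : I | M/2 ≤ |jump x s|}.Finite := finite_big_jumps hx (by linarith)
  set G := (hF.toFinset).erase t with hG
  by_cases hGne : G.Nonempty
  · obtain ⟨st, hstG, hmax⟩ := Finset.exists_max_image G (fun s => |jump x s|) hGne
    have hstt : st ≠ t := (Finset.mem_erase.mp hstG).1
    have hstF : M/2 ≤ |jump x st| := hF.mem_toFinset.mp (Finset.mem_erase.mp hstG).2
    have hstle : |jump x st| ≤ M :=
      le_csSup (bddAbove_jump_image hx hC) (mem_jump_image st)
    have hstlt : |jump x st| < M := by
      rcases lt_or_eq_of_le hstle with h | h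
      · exact h
      · exfalso
        have hst0 : 0 < st := by
          apply I_pos
          intro h0
          rw [h0, jump_zero, abs_zero] at hstF
          linarith
        have : st ∈ tildeA x 1 := ⟨hst0, I_le_one' st, by linarith, h⟩
        rw [ht] at this
        exact hstt this
    refine ⟨max (M/2) (|jump x st|), ?_, ?_, ?_⟩
    · apply max_lt (by linarith) hstlt
    · exact lt_of_lt_of_le (by linarith) (le_max_left _ _)
    · intro s hs
      by_cases hsF : s ∈ hF.toFinset
      · have : s ∈ G := Finset.mem_erase.mpr ⟨hs, hsF⟩
        exact (hmax s this).trans (le_max_right _ _)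
      · have : ¬ (M/2 ≤ |jump x s|) := by
          rw [Set.Finite.mem_toFinset] at hsF
          exact hsF
        push_neg at this
        exact le_trans this.le (le_max_left _ _)
  · refine ⟨M/2, by linarith, by linarith, ?_⟩
    intro s hs
    by_contra hcon
    push_neg at hcon
    have : s ∈ G := Finset.mem_erase.mpr ⟨hs, hF.mem_toFinset.mpr hcon.le⟩
    exact hGne ⟨s, this⟩


/-- if `#Ã₁(x) ≤ 1` then the modulus record time trimmer `R̃_trim` is
jointly `J₁`-continuous at `x`. -/
theorem stmt13 (x : I → ℝ) (hx : Cadlag x) (hA : (tildeA x 1).Subsingleton)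
    (xn : ℕ → I → ℝ) (hxn : ∀ n, Cadlag (xn n)) (hJ1 : J1Tendsto xn x) :
    ∃ l : ℕ → I → I, (∀ n, IsTimeChange (l n)) ∧
      Tendsto (fun n => dNorm (fun τ => (l n τ : ℝ) - (τ : ℝ))) atTop (𝓝 0) ∧
      Tendsto (fun n => dNorm (fun τ => xn n (l n τ) - x τ)) atTop (𝓝 0) ∧
      Tendsto (fun n => dNorm (fun τ => modRecordTrim (xn n) (l n τ) - modRecordTrim x τ))
        atTop (𝓝 0) := by
  obtain ⟨l, hl, hlI, hlx⟩ := hJ1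
  refine ⟨l, hl, hlI, hlx, ?_⟩
  choose Cn hCn using fun n => cadlag_bounded (hxn n)
  obtain ⟨C, hC⟩ := cadlag_bounded hx
  set ε : ℕ → ℝ := fun n => dNorm (fun τ => xn n (l n τ) - x τ) with hεdef
  have hεpt : ∀ n τ, |xn n (l n τ) - x τ| ≤ ε n := by
    intro n τ
    apply le_ciSup (f := fun τ => |xn n (l n τ) - x τ|) ?_ τ
    refine ⟨Cn n + C, ?_⟩
    rintro v ⟨w, rfl⟩
    calc |xn n (l n w) - x w| ≤ |xn n (l n w)| + |x w| := abs_sub _ _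
      _ ≤ Cn n + C := add_le_add (hCn n _) (hC w)
  have hε0 : ∀ n, 0 ≤ ε n := fun n => (abs_nonneg _).trans (hεpt n 0)
  have hεlim : Tendsto ε atTop (𝓝 0) := hlx
  have hjt : ∀ n s, |jump (xn n) (l n s) - jump x s| ≤ 2 * ε n :=
    fun n s => jump_transfer hx (hxn n) (hl n) (hεpt n) s
  have key : ∀ᶠ n in atTop, ∀ τ : I,
      |modRecordTrim (xn n) (l n τ) - modRecordTrim x τ| ≤ 3 * ε n := by
    by_cases hne : (tildeA x 1).Nonempty
    · -- unique maximal jump at t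
      obtain ⟨t, ht⟩ := hne
      have htA : tildeA x 1 = {t} := hA.eq_singleton_of_mem ht
      set M := modJumpSup x 1 with hMdef
      have hM : |jump x t| = M := ht.2.2.2
      have hM0 : 0 < M := hM ▸ ht.2.2.1
      obtain ⟨M', hM'M, hM'0, hM'⟩ := jump_gap hx htA hC
      have hev : ∀ᶠ n in atTop, ε n < (M - M') / 4 :=
        hεlim.eventually_lt_const (by linarith)
      filter_upwards [hev] with n hn
      set c := jump x t with hcdef
      set cn := jump (xn n) (l n t) with hcndef
      have h1 : |cn - c| ≤ 2 * ε n := hjt n t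
      have hcnlb : M - 2 * ε n ≤ |cn| := by
        have h2 := abs_sub_abs_le_abs_sub c cn
        have h3 : |c - cn| = |cn - c| := abs_sub_comm c cn
        have h4 : |c| = M := hM
        linarith
      have hsurj := timeChange_surj (hl n)
      have hub : ∀ u : I, |jump (xn n) u| ≤ |cn| := by
        intro u
        obtain ⟨s, rfl⟩ := hsurj u
        rcases eq_or_ne s t with rfl | hst
        · exact le_refl _
        · have h5 := hjt n s
          have h6 : |jump x s| ≤ M' := hM' s hst
          have h7 : |jump (xn n) (l n s)| - |jump x s| ≤ |jump (xn n) (l n s) - jump x s| :=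
            abs_sub_abs_le_abs_sub _ _
          linarith
      have hMn : modJumpSup (xn n) 1 = |cn| := by
        rw [modJumpSup]
        apply le_antisymm
        · apply csSup_le ⟨_, mem_jump_image (l n t)⟩
          rintro v ⟨u, -, rfl⟩
          exact hub u
        · refine le_csSup ⟨|cn|, ?_⟩ (mem_jump_image (l n t))
          rintro v ⟨u, -, rfl⟩
          exact hub u
      have hAn : tildeA (xn n) 1 = {l n t} := by
        ext u
        simp only [tildeA, mem_setOf_eq, mem_singleton_iff]
        constructor
        · rintro ⟨hu0, hu1, hupos, hueq⟩
          obtain ⟨s, rfl⟩ := hsurj u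
          rcases eq_or_ne s t with rfl | hst
          · rfl
          · exfalso
            have h5 := hjt n s
            have h6 : |jump x s| ≤ M' := hM' s hst
            have h7 : |jump (xn n) (l n s)| - |jump x s| ≤ |jump (xn n) (l n s) - jump x s| :=
              abs_sub_abs_le_abs_sub _ _
            rw [hueq, hMn] at *
            linarith
        · rintro rfl
          refine ⟨timeChange_pos (hl n) ht.1, I_le_one' _, ?_, hMn.symm⟩
          rw [← hcndef]
          linarith
      intro τ
      simp only [modRecordTrim, hAn, htA, csInf_singleton]
      by_cases hτ : t ≤ τ
      · rw [if_pos ⟨singleton_nonempty _, ((hl n).2.1.le_iff_le).mpr hτ⟩,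
          if_pos ⟨singleton_nonempty _, hτ⟩]
        have h8 := hεpt n τ
        have h9 : xn n (l n τ) - cn - (x τ - c) = (xn n (l n τ) - x τ) - (cn - c) := by ring
        rw [← hcndef, ← hcdef, h9]
        calc |(xn n (l n τ) - x τ) - (cn - c)| ≤ |xn n (l n τ) - x τ| + |cn - c| :=
            abs_sub _ _
          _ ≤ 3 * ε n := by linarith
      · rw [if_neg (fun h => hτ (((hl n).2.1.le_iff_le).mp h.2)),
          if_neg (fun h => hτ h.2)]
        have h8 := hεpt n τ
        linarith [hε0 n]
    · -- no jumps at all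
      have hz : ∀ s, jump x s = 0 := by
        by_contra hcon
        push_neg at hcon
        obtain ⟨s₀, hs₀⟩ := hcon
        exact hne (tildeA_nonempty_of_jump hx hs₀)
      refine Eventually.of_forall fun n => fun τ => ?_
      have hub : ∀ u : I, |jump (xn n) u| ≤ 2 * ε n := by
        intro u
        obtain ⟨s, rfl⟩ := timeChange_surj (hl n) u
        have h5 := hjt n s
        rw [hz s, sub_zero] at h5
        exact h5
      simp only [modRecordTrim]
      rw [if_neg (show ¬((tildeA x 1).Nonempty ∧ sInf (tildeA x 1) ≤ τ) from
        fun h => hne h.1)]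
      by_cases hcnd : (tildeA (xn n) 1).Nonempty ∧ sInf (tildeA (xn n) 1) ≤ l n τ
      · rw [if_pos hcnd]
        have h8 := hεpt n τ
        have h9 := hub (sInf (tildeA (xn n) 1))
        calc |xn n (l n τ) - jump (xn n) (sInf (tildeA (xn n) 1)) - x τ|
            = |(xn n (l n τ) - x τ) - jump (xn n) (sInf (tildeA (xn n) 1))| := by ring_nf
          _ ≤ |xn n (l n τ) - x τ| + |jump (xn n) (sInf (tildeA (xn n) 1))| := abs_sub _ _
          _ ≤ 3 * ε n := by linarith
      · rw [if_neg hcnd]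
        have h8 := hεpt n τ
        linarith [hε0 n]
  apply squeeze_zero' (g := fun n => 3 * ε n)
  · filter_upwards [key] with n hn
    rw [dNorm]
    refine le_trans (abs_nonneg (modRecordTrim (xn n) (l n 0) - modRecordTrim x 0))
      (le_ciSup (f := fun τ : I => |modRecordTrim (xn n) (l n τ) - modRecordTrim x τ|)
        ?_ (0 : I))
    refine ⟨3 * ε n, ?_⟩
    rintro v ⟨τ, rfl⟩
    exact hn τ
  · filter_upwards [key] with n hn
    rw [dNorm]
    exact ciSup_le fun τ => hn τ
  · simpa using hεlim.const_mul 3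
end
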